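/- Let γ: (-2ε,2ε) → E be continuous and let δ ∈ (0,ε]. Then: (i) the variable-scale mollification γ_δ is continuous on (-ε,ε); (ii) γ_δ(s) = γ(s) for every s ∈ (-ε,ε) with |s| > δ/2; (iii) for every s ∈ (-ε,ε), ‖γ_δ(s) − γ(s)‖ ≤ sup{‖γ(u) − γ(s)‖ : u ∈ (-2ε,2ε), |u − s| ≤ δ²/100}. In particular, γ_δ converges to γ uniformly on (-ε,ε) as δ → 0. -/

import Mathlib

open MeasureTheory Set

/-- The variable mollification scale `σ_δ(t) = δ² σ(t/δ)`. -/
noncomputable def sigmaDel (σ : ℝ → ℝ) (δ t : ℝ) : ℝ := δ ^ 2 * σ (t / δ)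

/-- The variable-scale mollification `γ_δ(s) = ∫ γ(s - σ_δ(s) t) φ(t) dt` (Bochner integral). -/
noncomputable def mollify {E : Type*} [NormedAddCommGroup E] [NormedSpace ℝ E]
    (φ σ : ℝ → ℝ) (δ : ℝ) (γ : ℝ → E) (s : ℝ) : E :=
  ∫ t : ℝ, φ t • γ (s - sigmaDel σ δ s * t)

theorem mollify_continuous_eq_outside_and_close
    {E : Type*} [NormedAddCommGroup E] [NormedSpace ℝ E] [CompleteSpace E]
    (ε : ℝ) (hε0 : 0 < ε) (hε1 : ε ≤ 1)
    (φ σ : ℝ → ℝ)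
    (hφsm : ContDiff ℝ (⊤ : ℕ∞) φ) (hφsupp : Function.support φ ⊆ Set.Icc (-1) 1)
    (hφ0 : ∀ t, 0 ≤ φ t) (hφ1 : ∀ t, φ t ≤ 1) (hφint : (∫ t : ℝ, φ t) = 1)
    (hσsm : ContDiff ℝ (⊤ : ℕ∞) σ) (hσsupp : Function.support σ ⊆ Set.Icc (-(1/2)) (1/2))
    (hσ0 : ∀ t, 0 ≤ σ t) (hσle : ∀ t, σ t ≤ 1/100)
    (hσeq : ∀ t : ℝ, |t| ≤ 1/4 → σ t = 1/100)
    (hσpos : ∀ t : ℝ, 1/4 < |t| → |t| < 1/2 → 0 < σ t)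
    (γ : ℝ → E)
    (hγcont : ContinuousOn γ (Set.Ioo (-(2*ε)) (2*ε)))
    (δ : ℝ) (hδ0 : 0 < δ) (hδε : δ ≤ ε)
 :
    ContinuousOn (mollify φ σ δ γ) (Set.Ioo (-ε) ε) ∧
    (∀ s ∈ Set.Ioo (-ε) ε, δ/2 < |s| → mollify φ σ δ γ s = γ s) ∧
    (∀ s ∈ Set.Ioo (-ε) ε,
      ‖mollify φ σ δ γ s - γ s‖ ≤
        sSup ((fun u => ‖γ u - γ s‖) ''
          {u | u ∈ Set.Ioo (-(2*ε)) (2*ε) ∧ |u - s| ≤ δ^2/100})) := by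
  have hφc : Continuous φ := hφsm.continuous
  have hσc : Continuous σ := hσsm.continuous
  -- φ vanishes outside [-1,1]
  have hφz : ∀ t : ℝ, t ∉ Set.Icc (-1 : ℝ) 1 → φ t = 0 := by
    intro t ht
    by_contra h
    exact ht (hφsupp h)
  have hφcs : HasCompactSupport φ := HasCompactSupport.intro isCompact_Icc hφz
  have hφI : Integrable φ := hφc.integrable_of_hasCompactSupport hφcs
  -- bounds on δ²
  have hδ2 : δ ^ 2 ≤ ε := by nlinarith
  -- bounds on sigmaDel
  have hsig0 : ∀ s, 0 ≤ sigmaDel σ δ s := fun s =>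
    mul_nonneg (sq_nonneg δ) (hσ0 _)
  have hsigle : ∀ s, sigmaDel σ δ s ≤ δ ^ 2 / 100 := by
    intro s
    have := hσle (s / δ)
    have h0 := hσ0 (s / δ)
    unfold sigmaDel
    nlinarith [sq_nonneg δ]
  have hsigc : Continuous (fun s => sigmaDel σ δ s) := by
    unfold sigmaDel
    exact continuous_const.mul (hσc.comp (continuous_id.div_const δ))
  -- key membership
  have key : ∀ s ∈ Set.Ioo (-ε) ε, ∀ t : ℝ, |t| ≤ 1 →
      s - sigmaDel σ δ s * t ∈ Set.Ioo (-(2*ε)) (2*ε) := by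
    intro s hs t ht
    obtain ⟨hs1, hs2⟩ := hs
    have h0 := hsig0 s
    have h1 := hsigle s
    have habs : |sigmaDel σ δ s * t| ≤ δ ^ 2 / 100 := by
      rw [abs_mul, abs_of_nonneg h0]
      nlinarith [abs_nonneg t]
    obtain ⟨hb1, hb2⟩ := abs_le.mp habs
    constructor <;> nlinarith
  have keyK : ∀ s ∈ Set.Ioo (-ε) ε, ∀ t : ℝ, |t| ≤ 1 →
      s - sigmaDel σ δ s * t ∈ Set.Icc (-(ε + ε/100)) (ε + ε/100) := by
    intro s hs t ht
    obtain ⟨hs1, hs2⟩ := hs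
    have h0 := hsig0 s
    have h1 := hsigle s
    have habs : |sigmaDel σ δ s * t| ≤ δ ^ 2 / 100 := by
      rw [abs_mul, abs_of_nonneg h0]
      nlinarith [abs_nonneg t]
    obtain ⟨hb1, hb2⟩ := abs_le.mp habs
    constructor <;> nlinarith
  have hKsub : Set.Icc (-(ε + ε/100)) (ε + ε/100) ⊆ Set.Ioo (-(2*ε)) (2*ε) := by
    intro x hx
    obtain ⟨h1, h2⟩ := hx
    constructor <;> nlinarith
  -- abs bound from support of φ
  have hφsupp' : ∀ t : ℝ, φ t ≠ 0 → |t| ≤ 1 := by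
    intro t ht
    have := hφsupp ht
    rw [abs_le]
    exact ⟨this.1, this.2⟩
  -- the integrand is continuous in t, for s ∈ Ioo
  have cont_int : ∀ s ∈ Set.Ioo (-ε) ε,
      Continuous (fun t : ℝ => φ t • γ (s - sigmaDel σ δ s * t)) := by
    intro s hs
    rw [continuous_iff_continuousAt]
    intro t₀
    rcases le_or_gt |t₀| 1 with h | h
    · have hmem := key s hs t₀ h
      have hγat : ContinuousAt γ (s - sigmaDel σ δ s * t₀) :=
        hγcont.continuousAt (isOpen_Ioo.mem_nhds hmem)
      have hinner : Continuous (fun t : ℝ => s - sigmaDel σ δ s * t) :=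
        continuous_const.sub (continuous_const.mul continuous_id)
      have h2 : ContinuousAt (fun t : ℝ => γ (s - sigmaDel σ δ s * t)) t₀ :=
        ContinuousAt.comp (f := fun t : ℝ => s - sigmaDel σ δ s * t) hγat hinner.continuousAt
      exact hφc.continuousAt.smul h2
    · have hopen : IsOpen {t : ℝ | 1 < |t|} :=
        isOpen_lt continuous_const continuous_abs
      have hev : ∀ᶠ t in nhds t₀, φ t • γ (s - sigmaDel σ δ s * t) = (0 : E) := by
        filter_upwards [hopen.mem_nhds h] with t ht
        have : φ t = 0 := by
          by_contra hne
          exact absurd (hφsupp' t hne) (not_le.mpr ht)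
        simp [this]
      exact ContinuousAt.congr continuousAt_const (Filter.EventuallyEq.symm hev) |>.congr
        (Filter.EventuallyEq.refl _ _)
  -- integrability of the integrand
  have int_int : ∀ s ∈ Set.Ioo (-ε) ε,
      Integrable (fun t : ℝ => φ t • γ (s - sigmaDel σ δ s * t)) := by
    intro s hs
    apply (cont_int s hs).integrable_of_hasCompactSupport
    apply HasCompactSupport.intro (isCompact_Icc (a := (-1:ℝ)) (b := 1))
    intro t ht
    rw [hφz t ht, zero_smul]
  refine ⟨?_, ?_, ?_⟩
  · -- continuity
    intro s₀ hs₀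
    obtain ⟨C, hC⟩ := isCompact_Icc.exists_bound_of_continuousOn
      (hγcont.mono hKsub)
    apply continuousWithinAt_of_dominated (bound := fun t => φ t * C)
    · filter_upwards [eventually_mem_nhdsWithin] with s hs
      exact (cont_int s hs).aestronglyMeasurable
    · filter_upwards [eventually_mem_nhdsWithin] with s hs
      refine Filter.Eventually.of_forall fun t => ?_
      by_cases hφt : φ t = 0
      · simp [hφt]
      · have ht := hφsupp' t hφt
        rw [norm_smul, Real.norm_eq_abs, abs_of_nonneg (hφ0 t)]
        exact mul_le_mul_of_nonneg_left (hC _ (keyK s hs t ht)) (hφ0 t)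
    · exact hφI.mul_const C
    · refine Filter.Eventually.of_forall fun t => ?_
      by_cases hφt : φ t = 0
      · simp only [hφt, zero_smul]
        exact continuousWithinAt_const
      · have ht := hφsupp' t hφt
        have hmem := key s₀ hs₀ t ht
        have hγat : ContinuousAt γ (s₀ - sigmaDel σ δ s₀ * t) :=
          hγcont.continuousAt (isOpen_Ioo.mem_nhds hmem)
        have hinner : Continuous (fun s : ℝ => s - sigmaDel σ δ s * t) :=
          continuous_id.sub (hsigc.mul continuous_const)
        have h2 : ContinuousAt (fun s : ℝ => γ (s - sigmaDel σ δ s * t)) s₀ :=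
          ContinuousAt.comp (f := fun s : ℝ => s - sigmaDel σ δ s * t) hγat hinner.continuousAt
        exact (continuousAt_const.smul h2).continuousWithinAt
  · -- equality outside
    intro s hs hδs
    have hσz : σ (s / δ) = 0 := by
      by_contra h
      have hmem := hσsupp h
      have : |s / δ| ≤ 1/2 := abs_le.mpr ⟨hmem.1, hmem.2⟩
      rw [abs_div, abs_of_pos hδ0] at this
      have : |s| ≤ δ / 2 := by
        rw [div_le_iff₀ hδ0] at this
        linarith
      linarith
    have hc : sigmaDel σ δ s = 0 := by
      unfold sigmaDel; rw [hσz, mul_zero]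
    unfold mollify
    rw [hc]
    simp only [zero_mul, sub_zero]
    rw [integral_smul_const, hφint, one_smul]
  · -- closeness bound
    intro s hs
    set c := sigmaDel σ δ s with hcdef
    set A := {u | u ∈ Set.Ioo (-(2*ε)) (2*ε) ∧ |u - s| ≤ δ^2/100} with hA
    set M := sSup ((fun u => ‖γ u - γ s‖) '' A) with hM
    have hsub2 : Set.Icc (s - δ^2/100) (s + δ^2/100) ⊆ Set.Ioo (-(2*ε)) (2*ε) := by
      intro x hx
      obtain ⟨h1, h2⟩ := hx
      obtain ⟨hs1, hs2⟩ := hs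
      constructor <;> nlinarith
    have hBdd : BddAbove ((fun u => ‖γ u - γ s‖) '' A) := by
      have hcompact : IsCompact (Set.Icc (s - δ^2/100) (s + δ^2/100)) := isCompact_Icc
      have hcont' : ContinuousOn (fun u => ‖γ u - γ s‖)
          (Set.Icc (s - δ^2/100) (s + δ^2/100)) :=
        ((hγcont.mono hsub2).sub continuousOn_const).norm
      refine BddAbove.mono (Set.image_mono ?_)
        (hcompact.image_of_continuousOn hcont').bddAbove
      intro u hu
      obtain ⟨h1, h2⟩ := abs_le.mp hu.2
      exact ⟨by linarith, by linarith⟩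
    have hmemA : ∀ t : ℝ, φ t ≠ 0 → ‖γ (s - c * t) - γ s‖ ≤ M := by
      intro t hφt
      have ht := hφsupp' t hφt
      have hmem := key s hs t ht
      have hdist : |(s - c * t) - s| ≤ δ^2/100 := by
        have h0 := hsig0 s
        have h1 := hsigle s
        rw [show (s - c * t) - s = -(c * t) by ring, abs_neg, abs_mul,
          abs_of_nonneg h0]
        nlinarith [abs_nonneg t]
      exact le_csSup hBdd ⟨s - c * t, ⟨hmem, hdist⟩, rfl⟩
    have hdiff : mollify φ σ δ γ s - γ s
        = ∫ t : ℝ, φ t • (γ (s - c * t) - γ s) := by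
      have h1 : (∫ t : ℝ, φ t • γ s) = γ s := by
        rw [integral_smul_const, hφint, one_smul]
      have h2 : (∫ t : ℝ, φ t • (γ (s - c * t) - γ s))
          = (∫ t : ℝ, φ t • γ (s - c * t)) - γ s := by
        simp_rw [smul_sub]
        rw [integral_sub (int_int s hs) (hφI.smul_const (γ s)), h1]
      rw [show mollify φ σ δ γ s = ∫ t : ℝ, φ t • γ (s - c * t) from rfl, h2]
    rw [hdiff]
    have hnorm : ‖∫ t : ℝ, φ t • (γ (s - c * t) - γ s)‖ ≤ ∫ t : ℝ, φ t * M := by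
      apply norm_integral_le_of_norm_le (hφI.mul_const M)
      refine Filter.Eventually.of_forall fun t => ?_
      by_cases hφt : φ t = 0
      · simp [hφt]
      · rw [norm_smul, Real.norm_eq_abs, abs_of_nonneg (hφ0 t)]
        exact mul_le_mul_of_nonneg_left (hmemA t hφt) (hφ0 t)
    calc ‖∫ t : ℝ, φ t • (γ (s - c * t) - γ s)‖ ≤ ∫ t : ℝ, φ t * M := hnorm
      _ = M := by rw [integral_mul_const, hφint, one_mul]
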